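/- arXiv:1309.1246 — 2 statements merged into one kernel-verified Lean document; each statement's English description precedes it below -/
import Mathlib

section
/- The function Z(θ₁, θ₂) = ∫₀^{2π} exp(θ₁ cos t + θ₂ sin t) dt satisfies θ₂ · ∂Z/∂θ₁ − θ₁ · ∂Z/∂θ₂ = 0, i.e., Z is annihilated by the operator θ₂∂₁ − θ₁∂₂. -/
open MeasureTheory intervalIntegral Real Metric

noncomputable def Z (θ₁ θ₂ : ℝ) : ℝ :=
  ∫ t in (0)..(2 * Real.pi), Real.exp (θ₁ * Real.cos t + θ₂ * Real.sin t)

lemma aux_hasDerivAt (c d : ℝ → ℝ) (hc : Continuous c) (hd : Continuous d)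
    (hc1 : ∀ t, |c t| ≤ 1) (M : ℝ) (hM : ∀ t, |d t| ≤ M) (x₀ : ℝ) :
    HasDerivAt (fun x => ∫ t in (0:ℝ)..(2 * Real.pi), Real.exp (x * c t + d t))
      (∫ t in (0:ℝ)..(2 * Real.pi), c t * Real.exp (x₀ * c t + d t)) x₀ := by
  have key := intervalIntegral.hasDerivAt_integral_of_dominated_loc_of_deriv_le
    (F := fun x t => Real.exp (x * c t + d t))
    (F' := fun x t => c t * Real.exp (x * c t + d t))
    (x₀ := x₀) (a := 0) (b := 2 * Real.pi) (μ := volume)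
    (bound := fun _ => Real.exp (|x₀| + 1 + M)) (s := Metric.ball x₀ 1) (Metric.ball_mem_nhds x₀ one_pos)
    ?_ ?_ ?_ ?_ ?_ ?_
  · exact key.2
  · filter_upwards with x
    exact (((continuous_const.mul hc).add hd).rexp).aestronglyMeasurable
  · exact (((continuous_const.mul hc).add hd).rexp).intervalIntegrable _ _
  · exact (hc.mul (((continuous_const.mul hc).add hd).rexp)).aestronglyMeasurable
  · filter_upwards with t _ x hx
    have hx' : |x - x₀| < 1 := by simpa [Real.dist_eq] using hx
    have hxb : |x| ≤ |x₀| + 1 := by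
      have := abs_sub_abs_le_abs_sub x x₀
      linarith
    have h1 : |x * c t + d t| ≤ |x₀| + 1 + M := by
      have hct := hc1 t
      have hdt := hM t
      have habs : |x * c t| ≤ |x₀| + 1 := by
        rw [abs_mul]
        calc |x| * |c t| ≤ (|x₀| + 1) * 1 :=
          mul_le_mul hxb hct (abs_nonneg _) (by positivity)
        _ = |x₀| + 1 := mul_one _
      calc |x * c t + d t| ≤ |x * c t| + |d t| := abs_add_le _ _
        _ ≤ |x₀| + 1 + M := by linarith
    have h2 : Real.exp (x * c t + d t) ≤ Real.exp (|x₀| + 1 + M) :=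
      Real.exp_le_exp.2 ((le_abs_self _).trans h1)
    calc ‖c t * Real.exp (x * c t + d t)‖ = |c t| * Real.exp (x * c t + d t) := by
          rw [norm_mul, Real.norm_eq_abs, Real.norm_eq_abs, Real.abs_exp]
      _ ≤ 1 * Real.exp (|x₀| + 1 + M) :=
          mul_le_mul (hc1 t) h2 (Real.exp_pos _).le zero_le_one
      _ = _ := one_mul _
  · exact intervalIntegrable_const
  · filter_upwards with t _ x _
    have : HasDerivAt (fun x : ℝ => x * c t + d t) (c t) x := by
      simpa using (hasDerivAt_mul_const (c t)).add_const (d t)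
    simpa [mul_comm] using this.exp

lemma integral_zero' (θ₁ θ₂ : ℝ) :
    ∫ t in (0:ℝ)..(2 * Real.pi),
      (θ₂ * (Real.cos t * Real.exp (θ₁ * Real.cos t + θ₂ * Real.sin t)) -
        θ₁ * (Real.sin t * Real.exp (θ₁ * Real.cos t + θ₂ * Real.sin t))) = 0 := by
  have h : ∀ t ∈ Set.uIcc (0:ℝ) (2 * Real.pi),
      HasDerivAt (fun t => Real.exp (θ₁ * Real.cos t + θ₂ * Real.sin t))
        (θ₂ * (Real.cos t * Real.exp (θ₁ * Real.cos t + θ₂ * Real.sin t)) -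
          θ₁ * (Real.sin t * Real.exp (θ₁ * Real.cos t + θ₂ * Real.sin t))) t := by
    intro t _
    have h1 : HasDerivAt (fun t : ℝ => θ₁ * Real.cos t + θ₂ * Real.sin t)
        (θ₂ * Real.cos t - θ₁ * Real.sin t) t := by
      have := ((Real.hasDerivAt_cos t).const_mul θ₁).add ((Real.hasDerivAt_sin t).const_mul θ₂)
      refine this.congr_deriv ?_
      ring
    have := h1.exp
    convert this using 1
    ring
  have hcont : Continuous fun t =>
      θ₂ * (Real.cos t * Real.exp (θ₁ * Real.cos t + θ₂ * Real.sin t)) -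
        θ₁ * (Real.sin t * Real.exp (θ₁ * Real.cos t + θ₂ * Real.sin t)) := by
    fun_prop
  rw [intervalIntegral.integral_eq_sub_of_hasDerivAt h (hcont.intervalIntegrable _ _)]
  simp [Real.cos_two_pi, Real.sin_two_pi]

theorem stmt_1 (θ₁ θ₂ : ℝ) :
    θ₂ * deriv (fun v => Z v θ₂) θ₁ - θ₁ * deriv (fun v => Z θ₁ v) θ₂ = 0 := by
  have h1 : HasDerivAt (fun v => Z v θ₂)
      (∫ t in (0:ℝ)..(2 * Real.pi), Real.cos t * Real.exp (θ₁ * Real.cos t + θ₂ * Real.sin t)) θ₁ := by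
    exact aux_hasDerivAt Real.cos (fun t => θ₂ * Real.sin t) Real.continuous_cos
      (continuous_const.mul Real.continuous_sin) (fun t => Real.abs_cos_le_one t) |θ₂|
      (fun t => by
        rw [abs_mul]
        calc |θ₂| * |Real.sin t| ≤ |θ₂| * 1 :=
          mul_le_mul_of_nonneg_left (Real.abs_sin_le_one t) (abs_nonneg _)
          _ = |θ₂| := mul_one _) θ₁
  have h2 : HasDerivAt (fun v => Z θ₁ v)
      (∫ t in (0:ℝ)..(2 * Real.pi), Real.sin t * Real.exp (θ₁ * Real.cos t + θ₂ * Real.sin t)) θ₂ := by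
    have := aux_hasDerivAt Real.sin (fun t => θ₁ * Real.cos t) Real.continuous_sin
      (continuous_const.mul Real.continuous_cos) (fun t => Real.abs_sin_le_one t) |θ₁|
      (fun t => by
        rw [abs_mul]
        calc |θ₁| * |Real.cos t| ≤ |θ₁| * 1 :=
          mul_le_mul_of_nonneg_left (Real.abs_cos_le_one t) (abs_nonneg _)
          _ = |θ₁| := mul_one _) θ₂
    convert this using 2 with v
    · unfold Z
      congr 1
      ext t
      rw [add_comm]
    · congr 1
      ext t
      rw [add_comm]
  rw [h1.deriv, h2.deriv]
  have hi1 : IntervalIntegrable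
      (fun t => Real.cos t * Real.exp (θ₁ * Real.cos t + θ₂ * Real.sin t)) volume 0 (2 * Real.pi) := by
    apply Continuous.intervalIntegrable
    fun_prop
  have hi2 : IntervalIntegrable
      (fun t => Real.sin t * Real.exp (θ₁ * Real.cos t + θ₂ * Real.sin t)) volume 0 (2 * Real.pi) := by
    apply Continuous.intervalIntegrable
    fun_prop
  rw [← intervalIntegral.integral_const_mul, ← intervalIntegral.integral_const_mul,
    ← intervalIntegral.integral_sub (hi1.const_mul θ₂) (hi2.const_mul θ₁)]
  exact integral_zero' θ₁ θ₂
end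

section
/- With c̄² + s̄² < 1, the function ℓ(θ₁, θ₂) = −c̄θ₁ − s̄θ₂ + log Z(θ₁, θ₂), where Z(θ₁, θ₂) = ∫₀^{2π} exp(θ₁ cos t + θ₂ sin t) dt, tends to +∞ as ‖(θ₁, θ₂)‖ → ∞; hence ℓ attains a global minimum on ℝ². -/
open Real Filter intervalIntegral

lemma integrand_cont (θ₁ θ₂ : ℝ) :
    Continuous fun t => Real.exp (θ₁ * Real.cos t + θ₂ * Real.sin t) := by fun_prop

lemma Z_pos (θ₁ θ₂ : ℝ) : 0 < Z θ₁ θ₂ := by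
  apply intervalIntegral.intervalIntegral_pos_of_pos
    ((integrand_cont θ₁ θ₂).intervalIntegrable _ _)
    (fun x => Real.exp_pos _)
  positivity

lemma Z_cont : Continuous fun θ : ℝ × ℝ => Z θ.1 θ.2 := by
  apply intervalIntegral.continuous_parametric_intervalIntegral_of_continuous'
    (f := fun (θ : ℝ × ℝ) t => Real.exp (θ.1 * Real.cos t + θ.2 * Real.sin t))
  fun_prop

lemma Z_lower (δ : ℝ) (hδ0 : 0 < δ) (hδπ : δ ≤ π) (θ₁ θ₂ : ℝ) :
    2 * δ * Real.exp (Real.cos δ * Real.sqrt (θ₁ ^ 2 + θ₂ ^ 2)) ≤ Z θ₁ θ₂ := by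
  set r := Real.sqrt (θ₁ ^ 2 + θ₂ ^ 2) with hr
  by_cases h0 : (θ₁, θ₂) = (0, 0)
  · obtain ⟨h1, h2⟩ := Prod.mk.injEq .. ▸ h0
    simp only [h1, h2] at hr ⊢
    have : r = 0 := by simp [hr]
    rw [this, mul_zero, Real.exp_zero, mul_one]
    have : Z 0 0 = 2 * π := by
      simp [Z]
    rw [this]
    have := Real.pi_pos
    nlinarith
  · set z : ℂ := ⟨θ₁, θ₂⟩ with hz
    have habs : ‖z‖ = r := by
      rw [Complex.norm_def, Complex.normSq_apply, hr]; ring_nf; rfl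
    have hrpos : 0 < r := by
      have hne : θ₁ ≠ 0 ∨ θ₂ ≠ 0 := by
        by_contra hcon; push_neg at hcon; exact h0 (by simp [hcon.1, hcon.2])
      rw [hr]; apply Real.sqrt_pos.2
      rcases hne with h | h <;> positivity
    have hz0 : z ≠ 0 := by
      intro h; rw [h] at habs; simp at habs; linarith
    set φ := Complex.arg z with hφ
    have hc : θ₁ = r * Real.cos φ := by
      have h' := Complex.cos_arg hz0
      rw [habs] at h'
      rw [hφ, h']
      field_simp; rfl
    have hs : θ₂ = r * Real.sin φ := by
      have h' := Complex.sin_arg z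
      rw [habs] at h'
      rw [hφ, h']
      field_simp; rfl
    set g : ℝ → ℝ := fun t => Real.exp (θ₁ * Real.cos t + θ₂ * Real.sin t) with hg
    have hper : Function.Periodic g (2 * π) := by
      intro t; simp [hg, Real.cos_add_two_pi, Real.sin_add_two_pi]
    have h1 : Z θ₁ θ₂ = ∫ t in (φ - δ)..(φ - δ + 2 * π), g t := by
      have h' := hper.intervalIntegral_add_eq (φ - δ) 0
      rw [Z, h']; norm_num; rfl
    have hgi : IntervalIntegrable g MeasureTheory.volume (φ - δ) (φ - δ + 2 * π) :=
      (integrand_cont θ₁ θ₂).intervalIntegrable _ _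
    have h2 : (∫ t in (φ - δ)..(φ + δ), g t) ≤ ∫ t in (φ - δ)..(φ - δ + 2 * π), g t := by
      apply intervalIntegral.integral_mono_interval le_rfl (by linarith) (by linarith)
      · filter_upwards with t using (Real.exp_pos _).le
      · exact hgi
    have h3 : 2 * δ * Real.exp (Real.cos δ * r) ≤ ∫ t in (φ - δ)..(φ + δ), g t := by
      have hconst : (∫ _ in (φ - δ)..(φ + δ), Real.exp (Real.cos δ * r))
          = 2 * δ * Real.exp (Real.cos δ * r) := by
        simp; ring
      rw [← hconst]
      apply intervalIntegral.integral_mono_on (by linarith)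
        (intervalIntegrable_const) ((integrand_cont θ₁ θ₂).intervalIntegrable _ _)
      intro t ht
      simp only [Set.mem_Icc] at ht
      have habs : |t - φ| ≤ δ := abs_sub_le_iff.2 ⟨by linarith, by linarith⟩
      have hcos : Real.cos δ ≤ Real.cos (t - φ) := by
        rw [← Real.cos_abs (t - φ)]
        exact Real.cos_le_cos_of_nonneg_of_le_pi (abs_nonneg _) hδπ habs
      have : θ₁ * Real.cos t + θ₂ * Real.sin t = r * Real.cos (t - φ) := by
        rw [hc, hs, Real.cos_sub]; ring
      rw [this]
      apply Real.exp_le_exp.2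
      have hr0 : 0 ≤ r := Real.sqrt_nonneg _
      nlinarith
    rw [h1]
    linarith

lemma log_Z_lower (δ : ℝ) (hδ0 : 0 < δ) (hδπ : δ ≤ π) (θ₁ θ₂ : ℝ) :
    Real.log (2 * δ) + Real.cos δ * Real.sqrt (θ₁ ^ 2 + θ₂ ^ 2) ≤ Real.log (Z θ₁ θ₂) := by
  have h := Z_lower δ hδ0 hδπ θ₁ θ₂
  have h2 : Real.log (2 * δ * Real.exp (Real.cos δ * Real.sqrt (θ₁ ^ 2 + θ₂ ^ 2)))
      = Real.log (2 * δ) + Real.cos δ * Real.sqrt (θ₁ ^ 2 + θ₂ ^ 2) := by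
    rw [Real.log_mul (by positivity) (Real.exp_ne_zero _), Real.log_exp]
  rw [← h2]
  exact Real.log_le_log (by positivity) h

theorem stmt_16 (cbar sbar : ℝ) (hcs : cbar ^ 2 + sbar ^ 2 < 1) :
    Filter.Tendsto
        (fun θ : ℝ × ℝ => -cbar * θ.1 - sbar * θ.2 + Real.log (Z θ.1 θ.2))
        (Filter.cocompact (ℝ × ℝ)) Filter.atTop
      ∧ ∃ θmin : ℝ × ℝ, ∀ θ : ℝ × ℝ,
          -cbar * θmin.1 - sbar * θmin.2 + Real.log (Z θmin.1 θmin.2)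
            ≤ -cbar * θ.1 - sbar * θ.2 + Real.log (Z θ.1 θ.2) := by
  set s := Real.sqrt (cbar ^ 2 + sbar ^ 2) with hsdef
  have hs0 : 0 ≤ s := Real.sqrt_nonneg _
  have hs1 : s < 1 := by
    rw [hsdef, show (1:ℝ) = Real.sqrt 1 by simp]
    exact Real.sqrt_lt_sqrt (by positivity) (by simpa using hcs)
  set δ := Real.arccos ((1 + s) / 2) with hδdef
  have hδ0 : 0 < δ := Real.arccos_pos.2 (by linarith)
  have hδπ : δ ≤ π := Real.arccos_le_pi _
  have hcosδ : Real.cos δ = (1 + s) / 2 :=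
    Real.cos_arccos (by linarith) (by linarith)
  -- linear bound
  have hlin : ∀ θ : ℝ × ℝ, cbar * θ.1 + sbar * θ.2 ≤ s * Real.sqrt (θ.1 ^ 2 + θ.2 ^ 2) := by
    intro θ
    have h1 : s * Real.sqrt (θ.1 ^ 2 + θ.2 ^ 2)
        = Real.sqrt ((cbar ^ 2 + sbar ^ 2) * (θ.1 ^ 2 + θ.2 ^ 2)) := by
      rw [hsdef, ← Real.sqrt_mul (by positivity)]
    rw [h1]
    rcases le_or_gt (cbar * θ.1 + sbar * θ.2) 0 with h | h
    · exact h.trans (Real.sqrt_nonneg _)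
    · rw [show cbar * θ.1 + sbar * θ.2
        = Real.sqrt ((cbar * θ.1 + sbar * θ.2) ^ 2) from (Real.sqrt_sq h.le).symm]
      apply Real.sqrt_le_sqrt
      nlinarith [sq_nonneg (cbar * θ.2 - sbar * θ.1)]
  -- global lower bound
  have key : ∀ θ : ℝ × ℝ,
      Real.log (2 * δ) + (1 - s) / 2 * ‖θ‖
        ≤ -cbar * θ.1 - sbar * θ.2 + Real.log (Z θ.1 θ.2) := by
    intro θ
    have hlog := log_Z_lower δ hδ0 hδπ θ.1 θ.2
    set r := Real.sqrt (θ.1 ^ 2 + θ.2 ^ 2) with hrdef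
    have hnorm : ‖θ‖ ≤ r := by
      rw [Prod.norm_def]
      apply max_le
      · rw [Real.norm_eq_abs, ← Real.sqrt_sq_eq_abs]
        exact Real.sqrt_le_sqrt (by nlinarith [sq_nonneg θ.2])
      · rw [Real.norm_eq_abs, ← Real.sqrt_sq_eq_abs]
        exact Real.sqrt_le_sqrt (by nlinarith [sq_nonneg θ.1])
    have h1 := hlin θ
    rw [hcosδ] at hlog
    have : (1 - s) / 2 * ‖θ‖ ≤ (1 - s) / 2 * r :=
      mul_le_mul_of_nonneg_left hnorm (by linarith)
    nlinarith
  have hcontZ : Continuous fun θ : ℝ × ℝ => Real.log (Z θ.1 θ.2) := by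
    rw [continuous_iff_continuousAt]
    intro θ
    exact (Z_cont.continuousAt).log (Z_pos θ.1 θ.2).ne'
  have hcont : Continuous
      (fun θ : ℝ × ℝ => -cbar * θ.1 - sbar * θ.2 + Real.log (Z θ.1 θ.2)) := by
    fun_prop
  have htend : Filter.Tendsto
      (fun θ : ℝ × ℝ => -cbar * θ.1 - sbar * θ.2 + Real.log (Z θ.1 θ.2))
      (Filter.cocompact (ℝ × ℝ)) Filter.atTop := by
    apply Filter.tendsto_atTop_mono key
    apply Filter.tendsto_atTop_add_const_left
    apply Filter.Tendsto.const_mul_atTop (by linarith : (0:ℝ) < (1 - s) / 2)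
    exact tendsto_norm_cocompact_atTop
  exact ⟨htend, hcont.exists_forall_le htend⟩
end
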